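/- For an odd prime power q, exactly (q+1)/2 of the q+1 directions (1-dimensional F_q-subspaces) of F_{q²} consist of squares, i.e., exactly (q+1)/2 of the q+1 parallel classes of lines through 0 in F_{q²} are spanned by a nonzero square of F_{q²}. -/

import Mathlib

open QuotientGroup

theorem paley_quadratic_directions_count (q : ℕ) (hq : IsPrimePow q) (hodd : Odd q)
    (F : Type*) [Field F] [Fintype F] [DecidableEq F] (hF : Fintype.card F = q ^ 2)
    (K : Subfield F) (hK : Nat.card K = q) :
    ({D : Set F | ∃ s : F, s ≠ 0 ∧ D = {x : F | ∃ c ∈ K, x = s * c}}).ncard = q + 1 ∧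
    ({D : Set F | ∃ s : F, s ≠ 0 ∧ IsSquare s ∧ D = {x : F | ∃ c ∈ K, x = s * c}}).ncard
      = (q + 1) / 2 := by
  classical
  have hq2 : 2 ≤ q := hq.two_le
  obtain ⟨k, hk⟩ := hodd
  have hq3 : 3 ≤ q := by omega
  have hoddF : Odd (Fintype.card F) := by
    rw [hF]; exact ⟨2 * k ^ 2 + 2 * k, by subst hk; ring⟩
  have hchar : ringChar F ≠ 2 := by
    intro h
    obtain ⟨n, hp, hc⟩ := FiniteField.card F (ringChar F)
    rw [h] at hc
    have hdvd : (2 : ℕ) ∣ Fintype.card F := by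
      rw [hc]; exact dvd_pow_self 2 (by exact_mod_cast n.ne_zero)
    obtain ⟨m, hm⟩ := hoddF
    obtain ⟨t, ht⟩ := hdvd
    omega
  -- the subgroup of units with values in K
  set Kx : Subgroup Fˣ :=
    { carrier := {u : Fˣ | (u : F) ∈ K}
      one_mem' := K.one_mem
      mul_mem' := fun ha hb => K.mul_mem ha hb
      inv_mem' := fun {u} hu => by
        show ((u⁻¹ : Fˣ) : F) ∈ K
        rw [Units.val_inv_eq_inv_val]
        exact K.inv_mem hu } with hKxdef
  have hmemKx : ∀ u : Fˣ, u ∈ Kx ↔ (u : F) ∈ K := fun u => Iff.rfl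
  -- card of Kx
  have hKxcard : Nat.card Kx = q - 1 := by
    have e : Kx ≃ Kˣ :=
      { toFun := fun u => Units.mk0 (⟨((u : Fˣ) : F), u.2⟩ : K)
          (by simp [Subtype.ext_iff])
        invFun := fun v => ⟨Units.mk0 (((v : K) : F))
            (by simpa using v.ne_zero), (v : K).2⟩
        left_inv := fun u => by ext; simp
        right_inv := fun v => by
          apply Units.ext
          apply Subtype.ext
          simp }
    rw [Nat.card_congr e, Nat.card_units, hK]
  -- the map from cosets to directions
  set ψ : Fˣ → Set F := fun u => {x : F | ∃ c ∈ K, x = (u : F) * c} with hψdef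
  have hsub : ∀ u v : Fˣ, u⁻¹ * v ∈ Kx → ψ v ⊆ ψ u := by
    intro u v huv x hx
    obtain ⟨d, hd, rfl⟩ := hx
    refine ⟨((u⁻¹ * v : Fˣ) : F) * d, K.mul_mem huv hd, ?_⟩
    push_cast [Units.val_inv_eq_inv_val]
    field_simp
  have hpsi : ∀ u v : Fˣ, ψ u = ψ v ↔ u⁻¹ * v ∈ Kx := by
    intro u v
    constructor
    · intro h
      have hv : (v : F) ∈ ψ u := by
        rw [h]; exact ⟨1, K.one_mem, (mul_one _).symm⟩
      obtain ⟨c, hc, hvc⟩ := hv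
      have : ((u⁻¹ * v : Fˣ) : F) = c := by
        push_cast [Units.val_inv_eq_inv_val]
        field_simp [hvc, mul_comm]
        exact hvc
      rw [hmemKx, this]; exact hc
    · intro h
      exact Set.Subset.antisymm (hsub v u (by simpa using Kx.inv_mem h)) (hsub u v h)
  set φ : (Fˣ ⧸ Kx) → Set F := fun x =>
    Quotient.liftOn' x ψ
      (fun a b h => (hpsi a b).mpr (QuotientGroup.leftRel_apply.mp h)) with hφdef
  have hφmk : ∀ u : Fˣ, φ (QuotientGroup.mk u) = ψ u := fun u => rfl
  have hinj : Function.Injective φ := by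
    intro x y
    induction x using Quotient.inductionOn' with
    | h a =>
    induction y using Quotient.inductionOn' with
    | h b =>
    intro h
    exact Quotient.sound' (QuotientGroup.leftRel_apply.mpr ((hpsi a b).mp h))
  -- first set is the range of φ
  have h1 : {D : Set F | ∃ s : F, s ≠ 0 ∧ D = {x : F | ∃ c ∈ K, x = s * c}}
      = Set.range φ := by
    ext D
    constructor
    · rintro ⟨s, hs, rfl⟩
      exact ⟨QuotientGroup.mk (Units.mk0 s hs), by rw [hφmk]; simp [hψdef]⟩
    · rintro ⟨x, rfl⟩
      induction x using Quotient.inductionOn' with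
      | h u =>
      exact ⟨(u : F), u.ne_zero, by rw [show Quotient.mk'' u = QuotientGroup.mk u from rfl, hφmk]⟩
  -- card of the quotient
  have hcardFx : Nat.card Fˣ = q ^ 2 - 1 := by
    rw [Nat.card_units, Nat.card_eq_fintype_card, hF]
  have hsq : q ^ 2 - 1 = (q - 1) * (q + 1) := by
    have : q ^ 2 = (q - 1) * (q + 1) + 1 := by
      subst hk
      simp only [Nat.add_sub_cancel]
      ring
    omega
  have hQcard : Nat.card (Fˣ ⧸ Kx) = q + 1 := by
    have h := Subgroup.card_eq_card_quotient_mul_card_subgroup Kx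
    rw [hcardFx, hKxcard, hsq] at h
    have h' : Nat.card (Fˣ ⧸ Kx) * (q - 1) = (q + 1) * (q - 1) := by
      rw [← h]; ring
    exact Nat.eq_of_mul_eq_mul_right (by omega) h'
  constructor
  · rw [h1, ← Set.image_univ, Set.ncard_image_of_injective _ hinj, Set.ncard_univ, hQcard]
  -- second part
  · set S : Subgroup Fˣ := (powMonoidHom 2 : Fˣ →* Fˣ).range with hSdef
    have hone : (1 : F) ≠ -1 := fun h =>
      Ring.neg_one_ne_one_of_char_ne_two hchar h.symm
    have hkerset : ((powMonoidHom 2 : Fˣ →* Fˣ).ker : Set Fˣ) = {1, -1} := by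
      ext u
      simp only [SetLike.mem_coe, MonoidHom.mem_ker, powMonoidHom_apply,
        Set.mem_insert_iff, Set.mem_singleton_iff]
      constructor
      · intro h
        have h2 : (u : F) * (u : F) = 1 := by
          simpa [sq] using congrArg Units.val h
        rcases mul_self_eq_one_iff.mp h2 with h' | h'
        · left; exact Units.ext (by simpa using h')
        · right; exact Units.ext (by simpa using h')
      · rintro (rfl | rfl) <;> simp
    have hkercard : Nat.card (powMonoidHom 2 : Fˣ →* Fˣ).ker = 2 := by
      have : Nat.card ((powMonoidHom 2 : Fˣ →* Fˣ).ker : Set Fˣ) = 2 := by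
        rw [hkerset, Nat.card_coe_set_eq, Set.ncard_pair]
        rw [Ne, Units.ext_iff]
        push_cast
        exact hone
      exact this
    have hScard : Nat.card S * 2 = q ^ 2 - 1 := by
      have h := Subgroup.card_eq_card_quotient_mul_card_subgroup
        (powMonoidHom 2 : Fˣ →* Fˣ).ker
      rw [hcardFx, hkercard,
        Nat.card_congr (QuotientGroup.quotientKerEquivRange
          (powMonoidHom 2 : Fˣ →* Fˣ)).toEquiv] at h
      exact h.symm
    -- Kx ≤ S
    have hdiv2 : Fintype.card F / 2 = (q - 1) * ((q + 1) / 2) := by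
      rw [hF]
      subst hk
      have h1 : (2 * k + 1) ^ 2 = 2 * (2 * k ^ 2 + 2 * k) + 1 := by ring
      have h2 : (2 * k + 1) ^ 2 / 2 = 2 * k ^ 2 + 2 * k := by omega
      rw [h2]
      have h3 : (2 * k + 1 + 1) / 2 = k + 1 := by omega
      rw [h3]
      have h4 : 2 * k + 1 - 1 = 2 * k := by omega
      rw [h4]
      ring
    have hKS : Kx ≤ S := by
      intro u hu
      have hx : (⟨(u : F), hu⟩ : K) ≠ 0 := by
        simp [Subtype.ext_iff]
      have hcardK : Fintype.card K = q := by
        rw [← Nat.card_eq_fintype_card, hK]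
      have h1 : ((⟨(u : F), hu⟩ : K)) ^ (q - 1) = 1 := by
        rw [← hcardK]
        exact FiniteField.pow_card_sub_one_eq_one _ hx
      have h2 : (u : F) ^ (q - 1) = 1 := by
        have := congrArg (Subtype.val) h1
        push_cast at this
        exact this
      have h3 : u ^ (q - 1) = 1 := by
        apply Units.ext
        push_cast
        exact h2
      have h4 : u ^ (Fintype.card F / 2) = 1 := by
        rw [hdiv2, pow_mul, h3, one_pow]
      obtain ⟨r, hr⟩ := (FiniteField.unit_isSquare_iff hchar u).mpr h4
      exact ⟨r, by simp [powMonoidHom_apply, sq, hr.symm]⟩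
    -- the image of S in the quotient
    set Smap : Subgroup (Fˣ ⧸ Kx) := S.map (QuotientGroup.mk' Kx) with hSmapdef
    have hSmapcard : Nat.card Smap * (q - 1) = Nat.card S := by
      set f : S →* (Fˣ ⧸ Kx) := (QuotientGroup.mk' Kx).comp S.subtype with hfdef
      have hrange : f.range = Smap := by
        rw [hfdef, MonoidHom.range_comp, Subgroup.range_subtype]
      have hkerf : f.ker = Kx.subgroupOf S := by
        rw [hfdef, ← MonoidHom.comap_ker, QuotientGroup.ker_mk',
          Subgroup.comap_subtype]
      have hkerfcard : Nat.card f.ker = q - 1 := by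
        rw [hkerf, Nat.card_congr (Subgroup.subgroupOfEquivOfLe hKS).toEquiv, hKxcard]
      have h := Subgroup.card_eq_card_quotient_mul_card_subgroup f.ker
      rw [hkerfcard,
        Nat.card_congr (QuotientGroup.quotientKerEquivRange f).toEquiv, hrange] at h
      exact h.symm
    have hSmapval : Nat.card Smap = (q + 1) / 2 := by
      have h1 : Nat.card Smap * (q - 1) * 2 = (q - 1) * (q + 1) := by
        rw [hSmapcard, hScard]; exact hsq
      have h2 : (q + 1) / 2 * 2 = q + 1 := by omega
      have h3 : ((q + 1) / 2) * (q - 1) * 2 = (q - 1) * (q + 1) := by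
        have e : ((q + 1) / 2) * (q - 1) * 2 = ((q + 1) / 2 * 2) * (q - 1) := by ring
        rw [e, h2]; ring
      have h4 := Nat.eq_of_mul_eq_mul_right (show 0 < 2 by omega) (h1.trans h3.symm)
      exact Nat.eq_of_mul_eq_mul_right (by omega : 0 < q - 1) h4
    -- identify the second set
    have h2 : {D : Set F | ∃ s : F, s ≠ 0 ∧ IsSquare s ∧ D = {x : F | ∃ c ∈ K, x = s * c}}
        = φ '' (Smap : Set (Fˣ ⧸ Kx)) := by
      ext D
      constructor
      · rintro ⟨s, hs, ⟨r, hr⟩, rfl⟩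
        have hrne : r ≠ 0 := by rintro rfl; simp at hr; exact hs hr
        have huS : Units.mk0 s hs ∈ S := by
          refine ⟨Units.mk0 r hrne, ?_⟩
          apply Units.ext
          simp [powMonoidHom_apply, sq, hr]
        refine ⟨QuotientGroup.mk (Units.mk0 s hs), ?_, by rw [hφmk]; simp [hψdef]⟩
        exact ⟨Units.mk0 s hs, huS, rfl⟩
      · rintro ⟨x, hx, rfl⟩
        obtain ⟨u, huS, rfl⟩ := hx
        obtain ⟨v, hv⟩ := huS
        rw [powMonoidHom_apply] at hv
        refine ⟨(u : F), u.ne_zero, ⟨(v : F), ?_⟩, ?_⟩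
        · have := congrArg (Units.val) hv
          push_cast at this
          rw [← this, sq]
        · rw [show (QuotientGroup.mk' Kx) u = QuotientGroup.mk u from rfl, hφmk]
    rw [h2, Set.ncard_image_of_injective _ hinj, ← hSmapval,
      ← Nat.card_coe_set_eq]
    rfl
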